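/- arXiv:2402.08254 — 2 statements merged into one kernel-verified Lean document; each statement's English description precedes it below -/
import Mathlib

section
/- Let K be a local field of characteristic p and ψ a Drinfeld A-module of good reduction over O_K with reduction φ̄ over the residue field k. Let x = ∑_{j≤0} x_j τ^j be the unique twisted series with coefficients in O_K, congruent to 1 mod m_K, satisfying ψ_a x = x φ̄_a for all a ∈ A (such x exists and is unique). Then the map χ: K^perf/O_{K^perf} → K^perf/O_{K^perf}, [ξ] ↦ ∑_{j≤0} [x_j ξ^{p^j}], is a well-defined bijection which is A-linear from the A-module structure via φ̄ to the A-module structure via ψ. -/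
/-!
STATEMENT 11: Let `K = k((t)) = LaurentSeries k` be a local field of characteristic `p`,
`Kperf = PerfectClosure K p` its perfection with valuation ring `O_{Kperf}`, and `ψ` a
Drinfeld `A`-module of good reduction over `O_K` (coefficients `c a : ℕ → O_K`, degree `D a`,
unit top coefficient for `a ≠ 0`, ring-homomorphism axioms), with reduction `φ̄` obtained by
taking residues (0-th coefficients, lifted via `HahnSeries.C`).  Let `x = ∑_{j≤0} x_j τ^j` be
the twisted series with coefficients in `O_K`, `x ≡ 1 mod m_K`, satisfying `ψ_a x = x φ̄_a`
for all `a` (stated coefficientwise).  Then the map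
`χ : Kperf/O → Kperf/O`, `[ξ] ↦ ∑_{j≤0} [x_j ξ^{p^j}]`, is a well-defined bijection which is
`A`-linear from the `φ̄`-module structure to the `ψ`-module structure.  This is expressed by
a function `χ : Kperf → Kperf` such that: (formula) for each `ξ` the partial sums
`∑_{n<M} x_n ξ^{p^{-n}}` are eventually congruent to `χ ξ` mod `O_{Kperf}`; (well-definedness
and injectivity mod `O`) `ξ ≡ η ↔ χ ξ ≡ χ η`; (surjectivity mod `O`); and (`A`-linearity)
`χ(φ̄_a ξ) ≡ ψ_a(χ ξ)` mod `O_{Kperf}`.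
-/

noncomputable section

variable (p : ℕ) [Fact p.Prime] (k : Type) [Field k] [Fintype k] [CharP k p]

instance : CharP (LaurentSeries k) p :=
  charP_of_injective_ringHom (HahnSeries.C_injective (Γ := ℤ) (R := k)) p

abbrev Kperf := PerfectClosure (LaurentSeries k) p

abbrev ιK : LaurentSeries k →+* Kperf p k := PerfectClosure.of (LaurentSeries k) p

def Operf : Set (Kperf p k) :=
  {ξ | ∀ (m : ℕ) (z : LaurentSeries k), ξ ^ (p ^ m) = ιK p k z → 0 ≤ z.orderTop}

/-- Inverse Frobenius iterated `n` times on the perfection: `ξ ↦ ξ^{p^{-n}}`. -/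
def frI (n : ℕ) (ξ : Kperf p k) : Kperf p k :=
  (⇑(frobeniusEquiv (Kperf p k) p).symm)^[n] ξ

/-- Coefficient of `τ^{d-m}` of `f x - x f̄` for a twisted polynomial `f` of degree `≤ d`
with coefficients in `O_K`; `f̄` is the coefficientwise residue of `f` lifted to `O_K`. -/
def conjEqCoeff (d : ℕ) (f : ℕ → LaurentSeries k) (x : ℕ → LaurentSeries k) (m : ℕ) :
    LaurentSeries k :=
  ∑ i ∈ (Finset.range (d + 1)).filter (fun i => d ≤ m + i),
    (f i * (x (m + i - d)) ^ (p ^ i) -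
      x (m + i - d) * HahnSeries.C ((⇑(frobeniusEquiv k p).symm)^[m + i - d] ((f i).coeff 0)))

/-- Evaluation of `ψ_a = ∑_{i ≤ D} c_i τ^i` on the perfection. -/
def evPsi (c : ℕ → LaurentSeries k) (D : ℕ) (ξ : Kperf p k) : Kperf p k :=
  ∑ i ∈ Finset.range (D + 1), ιK p k (c i) * ξ ^ (p ^ i)

/-- Evaluation of the reduction `φ̄_a` (coefficientwise residues of `ψ_a`). -/
def evPsiBar (c : ℕ → LaurentSeries k) (D : ℕ) (ξ : Kperf p k) : Kperf p k :=
  ∑ i ∈ Finset.range (D + 1), ιK p k (HahnSeries.C ((c i).coeff 0)) * ξ ^ (p ^ i)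

namespace DrinAux



open HahnSeries Finset

set_option linter.unusedSectionVars false
set_option maxHeartbeats 1000000
set_option synthInstance.maxHeartbeats 400000

variable {p : ℕ} [Fact p.Prime] {k : Type} [Field k] [Fintype k] [CharP k p]

local notation "K" => LaurentSeries k
local notation "ι" => ιK p k
local notation "O" => Operf p k

instance : NoZeroDivisors (Kperf p k) :=
  inferInstance

theorem iota_inj {z w : K} (h : ι z = ι w) : z = w := by
  rw [PerfectClosure.of_apply, PerfectClosure.of_apply, PerfectClosure.eq_iff] at h
  simpa using h

theorem exists_rep (ξ : Kperf p k) : ∃ m z, ξ ^ p ^ m = ι z := by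
  induction ξ using PerfectClosure.induction_on with
  | h x =>
    obtain ⟨m, z⟩ := x
    refine ⟨m, z, ?_⟩
    rw [PerfectClosure.mk_pow, PerfectClosure.of_apply, PerfectClosure.eq_iff]
    simp [iterate_frobenius]

theorem pow_rep {ξ : Kperf p k} {m : ℕ} {z : K} (h : ξ ^ p ^ m = ι z) (e : ℕ) :
    ξ ^ p ^ (m + e) = ι (z ^ p ^ e) := by
  rw [_root_.pow_add, pow_mul, h, map_pow]

theorem ot_mul {u v : K} {a b : WithTop ℤ} (ha : a ≤ u.orderTop) (hb : b ≤ v.orderTop) :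
    a + b ≤ (u * v).orderTop :=
  le_trans (add_le_add ha hb) orderTop_add_le_mul

theorem ot_pow {u : K} {a : ℤ} (ha : (a : WithTop ℤ) ≤ u.orderTop) (j : ℕ) :
    ((j * a : ℤ) : WithTop ℤ) ≤ (u ^ j).orderTop := by
  induction j with
  | zero => simp
  | succ n ih =>
    rw [pow_succ]
    have h1 : ((n + 1) * a : ℤ) = (n * a : ℤ) + a := by push_cast; ring
    calc (((n+1) * a : ℤ) : WithTop ℤ) = ((n * a : ℤ) : WithTop ℤ) + (a : WithTop ℤ) := by
          rw [h1, WithTop.coe_add]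
      _ ≤ _ := ot_mul ih ha

theorem ot_pow0 {u : K} (ha : 0 ≤ u.orderTop) (j : ℕ) : 0 ≤ (u ^ j).orderTop := by
  have := ot_pow (a := 0) (by simpa using ha) j
  simpa using this

theorem le_orderTop_sum {α : Type*} {s : Finset α} {f : α → K} {b : WithTop ℤ}
    (h : ∀ i ∈ s, b ≤ (f i).orderTop) : b ≤ (∑ i ∈ s, f i).orderTop := by
  induction s using Finset.cons_induction with
  | empty => simp
  | cons a s hx ih =>
    rw [Finset.sum_cons]
    refine le_trans ?_ min_orderTop_le_orderTop_add
    exact le_min (h a (Finset.mem_cons_self a s))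
      (ih fun i hi => h i (Finset.mem_cons_of_mem hi))

theorem one_le_of_pos {a : WithTop ℤ} (h : 0 < a) : 1 ≤ a := by
  cases a with
  | top => exact le_top
  | coe n =>
    rw [← WithTop.coe_zero, WithTop.coe_lt_coe] at h
    rw [← WithTop.coe_one, WithTop.coe_le_coe]
    omega

theorem memO_of_rep {ξ : Kperf p k} {m : ℕ} {z : K} (h : ξ ^ p ^ m = ι z)
    (hz : 0 ≤ z.orderTop) : ξ ∈ O := by
  intro m' z' h'
  have h1 : ξ ^ p ^ (m + m') = ι (z ^ p ^ m') := pow_rep h m'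
  have h2 : ξ ^ p ^ (m + m') = ι (z' ^ p ^ m) := by rw [add_comm]; exact pow_rep h' m
  have hzz : z ^ p ^ m' = z' ^ p ^ m := iota_inj (h1.symm.trans h2)
  have h3 : 0 ≤ (z' ^ p ^ m).orderTop := hzz ▸ ot_pow0 hz (p ^ m')
  rw [zero_le_orderTop_iff] at h3 ⊢
  rw [order_pow] at h3
  have hp : 0 < p ^ m := pow_pos (Nat.Prime.pos Fact.out) m
  rcases le_or_gt 0 z'.order with h4 | h4
  · exact h4
  · exfalso
    rw [nsmul_eq_mul] at h3
    have hp' : (0:ℤ) < ((p ^ m : ℕ) : ℤ) := by exact_mod_cast hp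
    have := mul_neg_of_pos_of_neg hp' h4
    linarith

theorem O_zero : (0 : Kperf p k) ∈ O := by
  refine memO_of_rep (m := 0) (z := 0) ?_ (by simp)
  simp

theorem O_one : (1 : Kperf p k) ∈ O := by
  refine memO_of_rep (m := 0) (z := 1) ?_ (by simp [orderTop_one])
  simp

theorem O_iota {z : K} (hz : 0 ≤ z.orderTop) : ι z ∈ O :=
  memO_of_rep (m := 0) (by simp) hz

theorem common_rep (ξ η : Kperf p k) : ∃ m z w, ξ ^ p ^ m = ι z ∧ η ^ p ^ m = ι w := by
  obtain ⟨m₁, z₁, h₁⟩ := exists_rep ξ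
  obtain ⟨m₂, z₂, h₂⟩ := exists_rep η
  exact ⟨m₁ + m₂, _, _, pow_rep h₁ m₂, by rw [add_comm]; exact pow_rep h₂ m₁⟩

theorem O_add {ξ η : Kperf p k} (hξ : ξ ∈ O) (hη : η ∈ O) : ξ + η ∈ O := by
  obtain ⟨m, z, w, hz, hw⟩ := common_rep ξ η
  have : (ξ + η) ^ p ^ m = ι (z + w) := by
    rw [add_pow_char_pow, hz, hw, RingHom.map_add]
  exact memO_of_rep this (le_trans (le_min (hξ m z hz) (hη m w hw)) min_orderTop_le_orderTop_add)

theorem O_neg {ξ : Kperf p k} (hξ : ξ ∈ O) : -ξ ∈ O := by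
  obtain ⟨m, z, hz⟩ := exists_rep ξ
  rcases Nat.even_or_odd (p ^ m) with he | ho
  · exact memO_of_rep (z := z) (by rw [he.neg_pow, hz]) (hξ m z hz)
  · refine memO_of_rep (z := -z) (by rw [ho.neg_pow, hz, RingHom.map_neg]) ?_
    rw [orderTop_neg]; exact hξ m z hz

theorem O_sub {ξ η : Kperf p k} (hξ : ξ ∈ O) (hη : η ∈ O) : ξ - η ∈ O := by
  rw [sub_eq_add_neg]; exact O_add hξ (O_neg hη)

theorem O_mul {ξ η : Kperf p k} (hξ : ξ ∈ O) (hη : η ∈ O) : ξ * η ∈ O := by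
  obtain ⟨m, z, w, hz, hw⟩ := common_rep ξ η
  have : (ξ * η) ^ p ^ m = ι (z * w) := by rw [mul_pow, hz, hw, RingHom.map_mul]
  refine memO_of_rep this ?_
  have := ot_mul (hξ m z hz) (hη m w hw)
  simpa using this

theorem O_sum {α : Type*} {s : Finset α} {f : α → Kperf p k} (h : ∀ i ∈ s, f i ∈ O) :
    (∑ i ∈ s, f i) ∈ O := by
  induction s using Finset.cons_induction with
  | empty => simpa using O_zero
  | cons a s hx ih =>
    rw [Finset.sum_cons]
    exact O_add (h a (Finset.mem_cons_self a s)) (ih fun i hi => h i (Finset.mem_cons_of_mem hi))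

theorem O_pow {ξ : Kperf p k} (hξ : ξ ∈ O) (j : ℕ) : ξ ^ j ∈ O := by
  induction j with
  | zero => simpa using O_one
  | succ n ih => rw [pow_succ]; exact O_mul ih hξ


theorem symm_iter_pow {R : Type*} [CommSemiring R] [ExpChar R p] [PerfectRing R p]
    (n : ℕ) (α : R) : ((⇑(frobeniusEquiv R p).symm)^[n] α) ^ p ^ n = α := by
  induction n generalizing α with
  | zero => simp
  | succ n ih =>
    rw [Function.iterate_succ_apply, pow_succ, pow_mul, ih, frobeniusEquiv_symm_pow_p]

theorem frI_pow (n : ℕ) (ξ : Kperf p k) : (frI p k n ξ) ^ p ^ n = ξ :=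
  symm_iter_pow n ξ

theorem frI_pow_add (n e : ℕ) (ξ : Kperf p k) : (frI p k n ξ) ^ p ^ (n + e) = ξ ^ p ^ e := by
  rw [_root_.pow_add, pow_mul, frI_pow]

theorem frI_zero (n : ℕ) : frI p k n 0 = 0 := by
  induction n with
  | zero => rfl
  | succ n ih =>
    simp only [frI, Function.iterate_succ_apply'] at ih ⊢
    rw [ih, RingEquiv.map_zero]

theorem frI_add (n : ℕ) (ξ η : Kperf p k) : frI p k n (ξ + η) = frI p k n ξ + frI p k n η := by
  induction n with
  | zero => rfl
  | succ n ih =>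
    simp only [frI, Function.iterate_succ_apply'] at ih ⊢
    rw [ih, RingEquiv.map_add]

theorem frI_mul (n : ℕ) (ξ η : Kperf p k) : frI p k n (ξ * η) = frI p k n ξ * frI p k n η := by
  induction n with
  | zero => rfl
  | succ n ih =>
    simp only [frI, Function.iterate_succ_apply'] at ih ⊢
    rw [ih, RingEquiv.map_mul]

theorem frI_sum (n : ℕ) {α : Type*} (s : Finset α) (f : α → Kperf p k) :
    frI p k n (∑ i ∈ s, f i) = ∑ i ∈ s, frI p k n (f i) := by
  induction s using Finset.cons_induction with
  | empty => simpa using frI_zero n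
  | cons a s hx ih => rw [Finset.sum_cons, Finset.sum_cons, frI_add, ih]

theorem frI_pow_comm (n j : ℕ) (ξ : Kperf p k) : frI p k n (ξ ^ j) = (frI p k n ξ) ^ j := by
  induction n with
  | zero => rfl
  | succ n ih =>
    simp only [frI, Function.iterate_succ_apply'] at ih ⊢
    rw [ih, RingEquiv.map_pow]

theorem frI_frI (a b : ℕ) (ξ : Kperf p k) : frI p k a (frI p k b ξ) = frI p k (a + b) ξ :=
  (Function.iterate_add_apply _ a b ξ).symm

theorem pow_p_inj {n : ℕ} {ξ η : Kperf p k} (h : ξ ^ p ^ n = η ^ p ^ n) : ξ = η := by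
  have h2 : (ξ - η) ^ p ^ n = 0 := by rw [sub_pow_char_pow, h, sub_self]
  have hn : p ^ n ≠ 0 := pow_ne_zero _ (Nat.Prime.ne_zero Fact.out)
  exact sub_eq_zero.mp ((pow_eq_zero_iff hn).mp h2)

theorem frI_iota_C (n : ℕ) (α : k) :
    frI p k n (ιK p k (HahnSeries.C α)) =
      ιK p k (HahnSeries.C ((⇑(frobeniusEquiv k p).symm)^[n] α)) := by
  apply pow_p_inj (n := n)
  rw [frI_pow, ← RingHom.map_pow, ← map_pow, symm_iter_pow]

theorem O_frI {ξ : Kperf p k} (hξ : ξ ∈ O) (n : ℕ) : frI p k n ξ ∈ O := by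
  obtain ⟨m, z, hz⟩ := exists_rep ξ
  have : (frI p k n ξ) ^ p ^ (n + m) = ι z := by rw [frI_pow_add, hz]
  exact memO_of_rep this (hξ m z hz)
theorem one_lt_p : 1 < p := Nat.Prime.one_lt Fact.out

theorem p_pos_int : (0:ℤ) < (p:ℤ) := by exact_mod_cast Nat.Prime.pos (Fact.out (p := p.Prime))

theorem one_le_pow_int (m : ℕ) : (1:ℤ) ≤ (p:ℤ) ^ m :=
  one_le_pow₀ (by exact_mod_cast (Nat.Prime.pos (Fact.out (p := p.Prime))))

theorem int_lt_pow {t : ℤ} {e : ℕ} (h : t.toNat < e) : t < (p : ℤ) ^ e := by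
  have h1 : e < p ^ e := Nat.lt_pow_self (n := e) (one_lt_p (p := p))
  have h2 : t ≤ (t.toNat : ℤ) := Int.self_le_toNat t
  have : (t.toNat : ℤ) < ((p ^ e : ℕ) : ℤ) := by exact_mod_cast lt_trans h h1
  push_cast at this
  omega

theorem frI_zero_eq (n : ℕ) (ξ : Kperf p k) (h : ξ = 0) : frI p k n ξ = 0 := by
  rw [h]; exact frI_zero n

theorem term_pow {n N m : ℕ} (hn : n ≤ N) {ξ : Kperf p k} {z : K}
    (hz : ξ ^ p ^ m = ι z) (u : K) :
    (ι u * frI p k n ξ) ^ p ^ (m + N) = ι (u ^ p ^ (m + N) * z ^ p ^ (N - n)) := by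
  have e1 : m + N = n + (m + (N - n)) := by omega
  rw [mul_pow, ← RingHom.map_pow, e1, frI_pow_add, RingHom.map_mul]
  congr 1
  rw [_root_.pow_add, pow_mul, hz, ← RingHom.map_pow]

theorem ot_nonneg_of {u : K} {b : ℤ} (h0 : 0 ≤ b) (h : (b : WithTop ℤ) ≤ u.orderTop) :
    0 ≤ u.orderTop := by
  refine le_trans ?_ h
  exact_mod_cast h0

theorem ot_coe_le {u : K} {a b : ℤ} (hab : a ≤ b) (h : (b : WithTop ℤ) ≤ u.orderTop) :
    (a : WithTop ℤ) ≤ u.orderTop :=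
  le_trans (by exact_mod_cast hab) h

theorem ot_mul_int {u v : K} {a b : ℤ} (ha : (a : WithTop ℤ) ≤ u.orderTop)
    (hb : (b : WithTop ℤ) ≤ v.orderTop) : ((a + b : ℤ) : WithTop ℤ) ≤ (u * v).orderTop := by
  rw [WithTop.coe_add]; exact ot_mul ha hb

/-- The graded valuation bound predicate: `v(ξ) ≥ -t`. -/
def Vge (t : ℕ) (ξ : Kperf p k) : Prop :=
  ∃ m z, ξ ^ p ^ m = ιK p k z ∧ ((-(t * p ^ m) : ℤ) : WithTop ℤ) ≤ z.orderTop

theorem Vge_of_term {u : K} {η : Kperf p k} {m n t : ℕ} {z : K} {cu bz : ℤ}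
    (hz : η ^ p ^ m = ι z) (hu : (cu : WithTop ℤ) ≤ u.orderTop)
    (hb : (bz : WithTop ℤ) ≤ z.orderTop)
    (har : -((t : ℤ) * p ^ (m + n)) ≤ (p : ℤ) ^ (m + n) * cu + bz) :
    Vge t (ι u * frI p k n η) := by
  refine ⟨m + n, u ^ p ^ (m + n) * z, ?_, ?_⟩
  · have := term_pow (le_refl n) hz u
    simpa using this
  · have h1 := ot_pow hu (p ^ (m + n))
    have h2 := ot_mul_int h1 hb
    refine le_trans ?_ h2
    rw [WithTop.coe_le_coe]
    push_cast
    push_cast at har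
    linarith

theorem Vge_of_O {t : ℕ} {ξ : Kperf p k} (h : ξ ∈ O) : Vge t ξ := by
  obtain ⟨m, z, hz⟩ := exists_rep ξ
  refine ⟨m, z, hz, le_trans ?_ (h m z hz)⟩
  rw [← WithTop.coe_zero, WithTop.coe_le_coe]
  have : (0:ℤ) ≤ (t:ℤ) * (p:ℤ) ^ m := by positivity
  omega

theorem Vge_zero_mem {ξ : Kperf p k} (h : Vge 0 ξ) : ξ ∈ O := by
  obtain ⟨m, z, hz, hb⟩ := h
  refine memO_of_rep hz (le_trans ?_ hb)
  rw [← WithTop.coe_zero, WithTop.coe_le_coe]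
  simp

theorem exists_Vge (ξ : Kperf p k) : ∃ t, Vge t ξ := by
  obtain ⟨m, z, hz⟩ := exists_rep ξ
  rcases eq_or_ne z 0 with rfl | hz0
  · exact ⟨0, m, 0, hz, by simp⟩
  · refine ⟨(-z.order).toNat, m, z, hz, ?_⟩
    have h2 : -z.order ≤ ((-z.order).toNat : ℤ) := Int.self_le_toNat _
    have h3 := mul_le_mul_of_nonneg_left (one_le_pow_int (p := p) m) (Int.natCast_nonneg ((-z.order).toNat))
    have key : -(((-z.order).toNat : ℤ) * (p:ℤ) ^ m) ≤ z.order := by linarith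
    rw [← order_eq_orderTop_of_ne_zero hz0]
    exact_mod_cast key

theorem Vge_lift {t : ℕ} {ξ : Kperf p k} (h : Vge t ξ) (m₀ : ℕ) :
    ∃ m z, m₀ ≤ m ∧ ξ ^ p ^ m = ιK p k z ∧ ((-(t * p ^ m) : ℤ) : WithTop ℤ) ≤ z.orderTop := by
  obtain ⟨m, z, hz, hb⟩ := h
  refine ⟨m + m₀, z ^ p ^ m₀, by omega, pow_rep hz m₀, ?_⟩
  have h1 := ot_pow hb (p ^ m₀)
  refine ot_coe_le (le_of_eq ?_) h1
  push_cast
  ring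

theorem Vge_add {t : ℕ} {ξ η : Kperf p k} (h1 : Vge t ξ) (h2 : Vge t η) : Vge t (ξ + η) := by
  obtain ⟨m₁, z₁, hz₁⟩ := exists_rep ξ
  obtain ⟨m₂, z₂, hz₂⟩ := exists_rep η
  obtain ⟨m, z, hm, hz, hb⟩ := Vge_lift h1 (m₁ + m₂)
  obtain ⟨m', w, hm', hw, hb'⟩ := Vge_lift h2 m
  obtain ⟨mz, hmz⟩ : ∃ e, m' = m + e := ⟨m' - m, by omega⟩
  subst hmz
  have hznew := pow_rep hz mz
  have hbz : ((-(t * p ^ (m + mz)) : ℤ) : WithTop ℤ) ≤ (z ^ p ^ mz).orderTop := by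
    have h1' := ot_pow hb (p ^ mz)
    refine ot_coe_le (le_of_eq ?_) h1'
    push_cast
    ring
  refine ⟨m + mz, z ^ p ^ mz + w, ?_, ?_⟩
  · rw [add_pow_char_pow, hznew, hw, RingHom.map_add]
  · exact le_trans (le_min hbz hb') min_orderTop_le_orderTop_add

theorem Vge_neg {t : ℕ} {ξ : Kperf p k} (h : Vge t ξ) : Vge t (-ξ) := by
  obtain ⟨m, z, hz, hb⟩ := h
  rcases Nat.even_or_odd (p ^ m) with he | ho
  · exact ⟨m, z, by rw [he.neg_pow, hz], hb⟩
  · exact ⟨m, -z, by rw [ho.neg_pow, hz, RingHom.map_neg], by rwa [orderTop_neg]⟩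

theorem Vge_sum {t : ℕ} {α : Type*} {s : Finset α} {f : α → Kperf p k}
    (h : ∀ i ∈ s, Vge t (f i)) : Vge t (∑ i ∈ s, f i) := by
  induction s using Finset.cons_induction with
  | empty => simpa using Vge_of_O (t := t) (O_zero (p := p) (k := k))
  | cons a s hx ih =>
    rw [Finset.sum_cons]
    exact Vge_add (h a (Finset.mem_cons_self a _))
      (ih fun i hi => h i (Finset.mem_cons_of_mem hi))

theorem ot_le_of_lead {w₀ r : K} {g : ℤ} (h0 : w₀.orderTop = (g : WithTop ℤ))
    (hr : (g : WithTop ℤ) < r.orderTop) : (w₀ + r).orderTop ≤ (g : WithTop ℤ) := by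
  apply orderTop_le_of_coeff_ne_zero
  rw [HahnSeries.coeff_add, coeff_eq_zero_of_lt_orderTop hr, add_zero]
  exact coeff_orderTop_ne h0
theorem x0_facts {x0 : K} (hx0 : 0 < (x0 - 1).orderTop) (hint : 0 ≤ x0.orderTop) :
    x0 ≠ 0 ∧ x0.order = 0 := by
  have hc : x0.coeff 0 = 1 := by
    have : x0 = (x0 - 1) + 1 := by ring
    rw [this, HahnSeries.coeff_add, coeff_eq_zero_of_lt_orderTop hx0]
    simp [HahnSeries.coeff_one]
  have hne : x0 ≠ 0 := HahnSeries.ne_zero_of_coeff_ne_zero (by rw [hc]; exact one_ne_zero)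
  have hle : x0.orderTop ≤ (0 : ℤ) :=
    orderTop_le_of_coeff_ne_zero (by rw [hc]; exact one_ne_zero)
  have heq : x0.orderTop = (0 : ℤ) := le_antisymm hle (by exact_mod_cast hint)
  refine ⟨hne, ?_⟩
  have := order_eq_orderTop_of_ne_zero hne
  rw [heq] at this
  exact_mod_cast this

theorem exists_tail {x : ℕ → K} (hxint : ∀ n, 0 ≤ (x n).orderTop)
    (hxpos : ∀ n, 0 < n → 0 < (x n).orderTop) (ξ : Kperf p k) :
    ∃ N, ∀ n, N ≤ n → ιK p k (x n) * frI p k n ξ ∈ O := by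
  obtain ⟨m, z, hz⟩ := exists_rep ξ
  rcases eq_or_ne z 0 with rfl | hz0
  · refine ⟨0, fun n _ => ?_⟩
    have hξ : ξ = 0 := by
      have : ξ ^ p ^ m = 0 := by rw [hz, RingHom.map_zero]
      exact pow_eq_zero_iff (pow_ne_zero _ (Nat.Prime.ne_zero Fact.out)) |>.mp this
    rw [frI_zero_eq n ξ hξ, mul_zero]
    exact O_zero
  · refine ⟨m + (-z.order).toNat + 1, fun n hn => ?_⟩
    apply Vge_zero_mem
    refine Vge_of_term (cu := 1) (bz := z.order) hz
      (one_le_of_pos (hxpos n (by omega))) (le_of_eq (order_eq_orderTop_of_ne_zero hz0)) ?_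
    have h1 : -z.order < (p:ℤ) ^ (m + n) := int_lt_pow (by omega)
    push_cast
    omega

theorem lt_int_ot {u : K} {g b : ℤ} (hb : (b : WithTop ℤ) ≤ u.orderTop) (h : g < b) :
    (g : WithTop ℤ) < u.orderTop :=
  lt_of_lt_of_le (by exact_mod_cast h) hb

theorem P_not_mem_O {x : ℕ → K} (hxint : ∀ n, 0 ≤ (x n).orderTop)
    (hxpos : ∀ n, 0 < n → 0 < (x n).orderTop) (hx0 : 0 < (x 0 - 1).orderTop)
    {ξ : Kperf p k} {m : ℕ} {z : K} (hz : ξ ^ p ^ m = ι z) (hzneg : z.orderTop < 0)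
    {N : ℕ} (hN : 1 ≤ N) :
    (∑ n ∈ Finset.range N, ιK p k (x n) * frI p k n ξ) ∉ O := by
  have hz0 : z ≠ 0 := by
    rintro rfl
    rw [orderTop_zero] at hzneg
    exact not_top_lt hzneg
  have ht : z.order < 0 := by
    rw [← order_eq_orderTop_of_ne_zero hz0] at hzneg
    exact_mod_cast hzneg
  obtain ⟨hx0ne, hx0ord⟩ := x0_facts hx0 (hxint 0)
  set t := z.order with htdef
  -- the power of the partial sum is ι w
  have hpow : (∑ n ∈ Finset.range N, ιK p k (x n) * frI p k n ξ) ^ p ^ (m + N)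
      = ι (∑ n ∈ Finset.range N, x n ^ p ^ (m + N) * z ^ p ^ (N - n)) := by
    rw [sum_pow_char_pow]
    rw [map_sum]
    exact Finset.sum_congr rfl fun n hn =>
      term_pow (le_of_lt (Finset.mem_range.mp hn)) hz (x n)
  set w := ∑ n ∈ Finset.range N, x n ^ p ^ (m + N) * z ^ p ^ (N - n) with hw
  set g : ℤ := (p ^ N : ℕ) * t with hg
  have hgneg : g < 0 := by
    have : (0:ℤ) < ((p ^ N : ℕ) : ℤ) := by exact_mod_cast pow_pos (Nat.Prime.pos Fact.out) N
    exact mul_neg_of_pos_of_neg this ht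
  have h0mem : 0 ∈ Finset.range N := Finset.mem_range.mpr (by omega)
  have hsplit : w = (∑ n ∈ (Finset.range N).erase 0, x n ^ p ^ (m + N) * z ^ p ^ (N - n))
      + x 0 ^ p ^ (m + N) * z ^ p ^ (N - 0) :=
    (Finset.sum_erase_add _ _ h0mem).symm
  have hw0ne : x 0 ^ p ^ (m + N) * z ^ p ^ (N - 0) ≠ 0 :=
    mul_ne_zero (pow_ne_zero _ hx0ne) (pow_ne_zero _ hz0)
  have hw0ord : (x 0 ^ p ^ (m + N) * z ^ p ^ (N - 0)).orderTop = (g : WithTop ℤ) := by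
    rw [← order_eq_orderTop_of_ne_zero hw0ne]
    rw [order_mul (pow_ne_zero _ hx0ne) (pow_ne_zero _ hz0), order_pow, order_pow,
      hx0ord, nsmul_eq_mul, nsmul_eq_mul, hg]
    norm_num
    rfl
  have hrest : ((g + 1 : ℤ) : WithTop ℤ)
      ≤ (∑ n ∈ (Finset.range N).erase 0, x n ^ p ^ (m + N) * z ^ p ^ (N - n)).orderTop := by
    apply le_orderTop_sum
    intro n hn
    have hn1 : 1 ≤ n := by
      have := Finset.mem_erase.mp hn; omega
    have hb1 := ot_pow (one_le_of_pos (hxpos n hn1)) (p ^ (m + N))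
    have hb2 : ((((p ^ (N - n) : ℕ) : ℤ) * t : ℤ) : WithTop ℤ) ≤ (z ^ p ^ (N - n)).orderTop :=
      ot_pow (le_of_eq (order_eq_orderTop_of_ne_zero hz0)) _
    have := ot_mul_int hb1 hb2
    refine le_trans ?_ this
    rw [WithTop.coe_le_coe, hg]
    have e1 : ((p ^ (N - n) : ℕ) : ℤ) ≤ ((p ^ N : ℕ) : ℤ) := by
      exact_mod_cast Nat.pow_le_pow_right (Nat.Prime.pos Fact.out) (by omega)
    have e2 : ((p ^ (N-n) : ℕ) : ℤ) * t ≥ ((p ^ N : ℕ) : ℤ) * t :=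
      mul_le_mul_of_nonpos_right e1 (le_of_lt ht)
    have e3 : (1:ℤ) ≤ ((p ^ (m+N) : ℕ) : ℤ) := by
      exact_mod_cast Nat.one_le_two_pow.trans (Nat.pow_le_pow_left (Nat.Prime.two_le Fact.out) _)
    push_cast at e1 e2 e3 ⊢
    linarith
  have hwle : w.orderTop ≤ (g : WithTop ℤ) := by
    rw [hsplit, add_comm]
    exact ot_le_of_lead hw0ord (lt_int_ot hrest (by omega))
  intro hmem
  have := hmem (m + N) w hpow
  have : (0 : WithTop ℤ) ≤ (g : WithTop ℤ) := le_trans this hwle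
  rw [← WithTop.coe_zero, WithTop.coe_le_coe] at this
  omega
theorem diag_regroup {β : Type*} [AddCommMonoid β] (M d : ℕ) (F : ℕ → ℕ → β) :
    ∑ n ∈ Finset.range M, ∑ i ∈ Finset.range (d + 1), F n i
      = ∑ s ∈ Finset.range (M + d), ∑ i ∈ (Finset.range (d + 1)).filter
          (fun i => d ≤ s + i ∧ s + i < d + M), F (s + i - d) i := by
  classical
  rw [Finset.sum_sigma' (Finset.range M) (fun _ => Finset.range (d + 1)) (fun n i => F n i),
    Finset.sum_sigma' (Finset.range (M + d))
      (fun s => (Finset.range (d + 1)).filter (fun i => d ≤ s + i ∧ s + i < d + M))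
      (fun s i => F (s + i - d) i)]
  refine Finset.sum_nbij' (fun x => ⟨d + x.1 - x.2, x.2⟩) (fun y => ⟨y.1 + y.2 - d, y.2⟩)
    ?_ ?_ ?_ ?_ ?_
  · rintro ⟨n, i⟩ hm
    simp only [Finset.mem_sigma, Finset.mem_range, Finset.mem_filter] at hm ⊢
    omega
  · rintro ⟨s, i⟩ hm
    simp only [Finset.mem_sigma, Finset.mem_range, Finset.mem_filter] at hm ⊢
    omega
  · rintro ⟨n, i⟩ hm
    simp only [Finset.mem_sigma, Finset.mem_range] at hm
    have h1 : d + n - i + i - d = n := by omega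
    simp only [h1]
  · rintro ⟨s, i⟩ hm
    simp only [Finset.mem_sigma, Finset.mem_range, Finset.mem_filter] at hm
    have h1 : d + (s + i - d) - i = s := by omega
    simp only [h1]
  · rintro ⟨n, i⟩ hm
    simp only [Finset.mem_sigma, Finset.mem_range] at hm
    have h1 : d + n - i + i - d = n := by omega
    simp only [h1]
section
variable (p) (k)

/-- Partial sums defining the quasi-isomorphism. -/
def Psum (x : ℕ → LaurentSeries k) (M : ℕ) (ξ : Kperf p k) : Kperf p k :=
  ∑ n ∈ Finset.range M, ιK p k (x n) * frI p k n ξ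

/-- The entries of `ψ_a x - x φ̄_a`. -/
def eK (c : ℕ → LaurentSeries k) (x : ℕ → LaurentSeries k) (n i : ℕ) : LaurentSeries k :=
  c i * x n ^ p ^ i - x n * HahnSeries.C ((⇑(frobeniusEquiv k p).symm)^[n] ((c i).coeff 0))

theorem conjEq_eq (d : ℕ) (f x : ℕ → K) (m : ℕ) :
    conjEqCoeff p k d f x m
      = ∑ i ∈ (Finset.range (d + 1)).filter (fun i => d ≤ m + i), eK p k f x (m + i - d) i :=
  rfl

end

theorem frI_zero' (w : Kperf p k) : frI p k 0 w = w := rfl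
end DrinAux

set_option maxHeartbeats 4000000
set_option synthInstance.maxHeartbeats 1000000

open DrinAux in
theorem canonical_quasiIso_bijective_A_linear
    (A : Type) [CommRing A] (c : A → ℕ → LaurentSeries k) (D : A → ℕ)
    (hint : ∀ a i, 0 ≤ (c a i).orderTop)
    (hsupp : ∀ a i, D a < i → c a i = 0)
    (hone : ∀ ξ : Kperf p k, evPsi p k (c 1) (D 1) ξ = ξ)
    (hadd : ∀ a b ξ, evPsi p k (c (a + b)) (D (a + b)) ξ =
      evPsi p k (c a) (D a) ξ + evPsi p k (c b) (D b) ξ)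
    (hmul : ∀ a b ξ, evPsi p k (c (a * b)) (D (a * b)) ξ =
      evPsi p k (c a) (D a) (evPsi p k (c b) (D b) ξ))
    (hgood : ∀ a : A, a ≠ 0 → (c a (D a)).orderTop = 0)
    (x : ℕ → LaurentSeries k)
    (hxint : ∀ n, 0 ≤ (x n).orderTop)
    (hx0 : 0 < (x 0 - 1).orderTop) (hxpos : ∀ n, 0 < n → 0 < (x n).orderTop)
    (hconj : ∀ (a : A) (m : ℕ), conjEqCoeff p k (D a) (c a) x m = 0) :
    ∃ χ : Kperf p k → Kperf p k,
      (∀ ξ : Kperf p k, ∃ N : ℕ, ∀ M, N ≤ M →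
        (χ ξ - ∑ n ∈ Finset.range M, ιK p k (x n) * frI p k n ξ) ∈ Operf p k) ∧
      (∀ ξ η : Kperf p k, (ξ - η ∈ Operf p k ↔ χ ξ - χ η ∈ Operf p k)) ∧
      (∀ η : Kperf p k, ∃ ξ, χ ξ - η ∈ Operf p k) ∧
      (∀ (a : A) (ξ : Kperf p k),
        χ (evPsiBar p k (c a) (D a) ξ) - evPsi p k (c a) (D a) (χ ξ) ∈ Operf p k) := by
  classical
  have hp0 : p ≠ 0 := Nat.Prime.ne_zero Fact.out
  choose Nf hNf using fun ξ : Kperf p k => exists_tail hxint hxpos ξ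
  set χ : Kperf p k → Kperf p k := fun ξ => Psum p k x (Nf ξ) ξ with hχdef
  have hkey : ∀ (ξ : Kperf p k) (M : ℕ), Nf ξ ≤ M → χ ξ - Psum p k x M ξ ∈ Operf p k := by
    intro ξ M hM
    have hsplit : Psum p k x M ξ
        = Psum p k x (Nf ξ) ξ + ∑ n ∈ Finset.Ico (Nf ξ) M, ιK p k (x n) * frI p k n ξ := by
      simp only [Psum, Finset.range_eq_Ico]
      exact (Finset.sum_Ico_consecutive _ (Nat.zero_le _) hM).symm
    have heq : χ ξ - Psum p k x M ξ
        = -∑ n ∈ Finset.Ico (Nf ξ) M, ιK p k (x n) * frI p k n ξ := by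
      rw [hsplit, hχdef]; ring
    rw [heq]
    exact O_neg (O_sum fun n hn => hNf ξ n (Finset.mem_Ico.mp hn).1)
  have hchi0 : χ 0 = 0 := by
    simp only [hχdef, Psum]
    exact Finset.sum_eq_zero fun n _ => by rw [frI_zero, mul_zero]
  have hchiadd : ∀ ξ η, χ (ξ + η) - (χ ξ + χ η) ∈ Operf p k := by
    intro ξ η
    set M := max (Nf (ξ + η)) (max (Nf ξ) (Nf η)) with hM
    have e : Psum p k x M (ξ + η) = Psum p k x M ξ + Psum p k x M η := by
      simp only [Psum]
      rw [← Finset.sum_add_distrib]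
      exact Finset.sum_congr rfl fun n _ => by rw [frI_add, mul_add]
    have h1 := hkey (ξ + η) M (le_max_left _ _)
    have h2 := hkey ξ M (le_trans (le_max_left _ _) (le_max_right _ _))
    have h3 := hkey η M (le_trans (le_max_right _ _) (le_max_right _ _))
    have heq : χ (ξ + η) - (χ ξ + χ η)
        = (χ (ξ + η) - Psum p k x M (ξ + η)) - (χ ξ - Psum p k x M ξ)
          - (χ η - Psum p k x M η) := by
      rw [e]; ring
    rw [heq]
    exact O_sub (O_sub h1 h2) h3
  have hchiO : ∀ ξ, ξ ∈ Operf p k → χ ξ ∈ Operf p k := by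
    intro ξ hξ
    exact O_sum fun n _ => O_mul (O_iota (hxint n)) (O_frI hξ n)
  have hchiNot : ∀ ξ, ξ ∉ Operf p k → χ ξ ∉ Operf p k := by
    intro ξ hξ hc
    simp only [Operf, Set.mem_setOf_eq] at hξ
    push_neg at hξ
    obtain ⟨m, z, hz, hzneg⟩ := hξ
    have h1 := hkey ξ (max (Nf ξ) 1) (le_max_left _ _)
    have h2 : Psum p k x (max (Nf ξ) 1) ξ ∈ Operf p k := by
      have h3 := O_sub hc h1
      have heq : χ ξ - (χ ξ - Psum p k x (max (Nf ξ) 1) ξ) = Psum p k x (max (Nf ξ) 1) ξ := by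
        ring
      rwa [heq] at h3
    exact P_not_mem_O hxint hxpos hx0 hz hzneg (le_max_right (Nf ξ) 1) h2
  have hiff : ∀ ξ η : Kperf p k, (ξ - η ∈ Operf p k ↔ χ ξ - χ η ∈ Operf p k) := by
    intro ξ η
    have hd : χ ξ - χ η - χ (ξ - η) ∈ Operf p k := by
      have h1 := hchiadd (ξ - η) η
      rw [show ξ - η + η = ξ by ring] at h1
      rw [show χ ξ - χ η - χ (ξ - η) = χ ξ - (χ (ξ - η) + χ η) by ring]
      exact h1
    constructor
    · intro h
      rw [show χ ξ - χ η = (χ ξ - χ η - χ (ξ - η)) + χ (ξ - η) by ring]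
      exact O_add hd (hchiO _ h)
    · intro h
      by_contra hsub
      refine hchiNot _ hsub ?_
      rw [show χ (ξ - η) = -(χ ξ - χ η - χ (ξ - η)) + (χ ξ - χ η) by ring]
      exact O_add (O_neg hd) h
  -- step for surjectivity
  have hstep : ∀ (t : ℕ) (η : Kperf p k), Vge (t + 1) η → Vge t (η - χ η) := by
    intro t η h
    obtain ⟨m, z, hz, hb⟩ := h
    have hb' : ((-(((t : ℤ) + 1) * (p : ℤ) ^ m) : ℤ) : WithTop ℤ) ≤ z.orderTop := by
      refine le_trans (le_of_eq ?_) hb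
      norm_cast
    set M := max (Nf η) 1 with hMdef
    have hM1 : 1 ≤ M := le_max_right _ _
    have hsplit : Psum p k x M η
        = ιK p k (x 0) * frI p k 0 η + ∑ n ∈ Finset.Ico 1 M, ιK p k (x n) * frI p k n η := by
      simp only [Psum, Finset.range_eq_Ico]
      rw [← Finset.sum_Ico_consecutive _ (Nat.zero_le 1) hM1]
      congr 1
      rw [← Finset.range_eq_Ico, Finset.sum_range_one]
    have hη1 : Vge t (ιK p k (1 - x 0) * frI p k 0 η) := by
      refine Vge_of_term (cu := 1) hz ?_ hb' ?_
      · rw [show (1 : LaurentSeries k) - x 0 = -(x 0 - 1) by ring, HahnSeries.orderTop_neg]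
        exact_mod_cast one_le_of_pos hx0
      · simp only [Nat.add_zero]
        push_cast
        linarith
    have hη2 : ∀ n ∈ Finset.Ico 1 M, Vge t (-(ιK p k (x n) * frI p k n η)) := by
      intro n hn
      have hn1 : 1 ≤ n := (Finset.mem_Ico.mp hn).1
      refine Vge_neg (Vge_of_term (cu := 1) hz
        (by exact_mod_cast one_le_of_pos (hxpos n hn1)) hb' ?_)
      have hpw : (p : ℤ) ^ m ≤ (p : ℤ) ^ (m + n) :=
        pow_le_pow_right₀ (by exact_mod_cast (one_lt_p (p := p)).le) (by omega)
      have ht0 : (0 : ℤ) ≤ (t : ℤ) + 1 := by positivity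
      have := mul_nonneg ht0 (sub_nonneg.mpr hpw)
      push_cast
      nlinarith
    have h1 := hkey η M (le_max_left _ _)
    have heq : η - χ η
        = (ιK p k (1 - x 0) * frI p k 0 η + ∑ n ∈ Finset.Ico 1 M, -(ιK p k (x n) * frI p k n η))
          + -(χ η - Psum p k x M η) := by
      rw [Finset.sum_neg_distrib, hsplit, RingHom.map_sub, RingHom.map_one, frI_zero']
      ring
    rw [heq]
    exact Vge_add (Vge_add hη1 (Vge_sum hη2)) (Vge_of_O (O_neg h1))
  have hsurj : ∀ η : Kperf p k, ∃ ξ, χ ξ - η ∈ Operf p k := by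
    suffices h : ∀ (t : ℕ) (η : Kperf p k), Vge t η → ∃ ξ, χ ξ - η ∈ Operf p k by
      intro η
      obtain ⟨t, ht⟩ := exists_Vge η
      exact h t η ht
    intro t
    induction t with
    | zero =>
      intro η h
      refine ⟨0, ?_⟩
      rw [hchi0, zero_sub]
      exact O_neg (Vge_zero_mem h)
    | succ t ih =>
      intro η h
      obtain ⟨ξ₁, hξ₁⟩ := ih (η - χ η) (hstep t η h)
      refine ⟨ξ₁ + η, ?_⟩
      rw [show χ (ξ₁ + η) - η = (χ (ξ₁ + η) - (χ ξ₁ + χ η)) + (χ ξ₁ - (η - χ η)) by ring]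
      exact O_add (hchiadd ξ₁ η) hξ₁
  -- A-linearity
  have hlin : ∀ (a : A) (ξ : Kperf p k),
      χ (evPsiBar p k (c a) (D a) ξ) - evPsi p k (c a) (D a) (χ ξ) ∈ Operf p k := by
    intro a ξ
    set d := D a with hd
    obtain ⟨m, z, hz⟩ := exists_rep ξ
    rcases eq_or_ne z 0 with rfl | hz0
    · have hξ0 : ξ = 0 := by
        have h0 : ξ ^ p ^ m = 0 := by rw [hz, RingHom.map_zero]
        exact pow_eq_zero_iff (pow_ne_zero m hp0) |>.mp h0
      subst hξ0
      have h1 : evPsiBar p k (c a) d 0 = 0 :=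
        Finset.sum_eq_zero fun i _ => by rw [zero_pow (pow_ne_zero i hp0), mul_zero]
      have h2 : evPsi p k (c a) d 0 = 0 :=
        Finset.sum_eq_zero fun i _ => by rw [zero_pow (pow_ne_zero i hp0), mul_zero]
      rw [h1, hchi0, h2, sub_zero]
      exact O_zero
    · set t0 := (-z.order).toNat with ht0
      have hBa : Nf ξ ≤ max (Nf ξ) (Nf (evPsiBar p k (c a) d ξ)) := le_max_left _ _
      have hBb : Nf (evPsiBar p k (c a) d ξ) ≤ max (Nf ξ) (Nf (evPsiBar p k (c a) d ξ)) :=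
        le_max_right _ _
      set B := max (Nf ξ) (Nf (evPsiBar p k (c a) d ξ)) with hBdef
      set M := B + d + t0 + 2 with hMdef
      set ζ : ℕ → Kperf p k :=
        fun s => if d ≤ s then frI p k (s - d) ξ else ξ ^ p ^ (d - s) with hζdef
      have hζ : ∀ n i, i ≤ d → (frI p k n ξ) ^ p ^ i = ζ (d + n - i) := by
        intro n i hi
        rcases le_or_gt i n with hin | hin
        · have hdle : d ≤ d + n - i := by omega
          have e1 : frI p k n ξ = frI p k i (frI p k (n - i) ξ) := by
            rw [frI_frI]
            congr 1
            omega
          rw [e1, frI_pow]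
          simp only [hζdef]
          rw [if_pos hdle, show d + n - i - d = n - i by omega]
        · have hdle : ¬ d ≤ d + n - i := by omega
          have e1 := frI_pow_add n (i - n) ξ
          rw [show n + (i - n) = i by omega] at e1
          rw [e1]
          simp only [hζdef]
          rw [if_neg hdle, show d - (d + n - i) = i - n by omega]
      have hA : Psum p k x M (evPsiBar p k (c a) d ξ)
          = ∑ n ∈ Finset.range M, ∑ i ∈ Finset.range (d + 1),
              ιK p k (x n * HahnSeries.C ((⇑(frobeniusEquiv k p).symm)^[n] ((c a i).coeff 0)))
                * ζ (d + n - i) := by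
        simp only [Psum, evPsiBar]
        refine Finset.sum_congr rfl fun n _ => ?_
        rw [frI_sum, Finset.mul_sum]
        refine Finset.sum_congr rfl fun i hi => ?_
        rw [frI_mul, frI_pow_comm, frI_iota_C,
          hζ n i (Nat.lt_succ_iff.mp (Finset.mem_range.mp hi)), RingHom.map_mul]
        ring
      have hB2 : evPsi p k (c a) d (Psum p k x M ξ)
          = ∑ i ∈ Finset.range (d + 1), ∑ n ∈ Finset.range M,
              ιK p k (c a i * x n ^ p ^ i) * ζ (d + n - i) := by
        simp only [evPsi, Psum]
        refine Finset.sum_congr rfl fun i hi => ?_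
        rw [sum_pow_char_pow, Finset.mul_sum]
        refine Finset.sum_congr rfl fun n _ => ?_
        rw [mul_pow, ← RingHom.map_pow, hζ n i (Nat.lt_succ_iff.mp (Finset.mem_range.mp hi)),
          RingHom.map_mul]
        ring
      have hDelta : evPsi p k (c a) d (Psum p k x M ξ) - Psum p k x M (evPsiBar p k (c a) d ξ)
          = ∑ n ∈ Finset.range M, ∑ i ∈ Finset.range (d + 1),
              ιK p k (eK p k (c a) x n i) * ζ (d + n - i) := by
        rw [hA, hB2]
        rw [show (∑ i ∈ Finset.range (d + 1), ∑ n ∈ Finset.range M,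
              ιK p k (c a i * x n ^ p ^ i) * ζ (d + n - i))
            = ∑ n ∈ Finset.range M, ∑ i ∈ Finset.range (d + 1),
              ιK p k (c a i * x n ^ p ^ i) * ζ (d + n - i) from Finset.sum_comm]
        rw [← Finset.sum_sub_distrib]
        refine Finset.sum_congr rfl fun n _ => ?_
        rw [← Finset.sum_sub_distrib]
        refine Finset.sum_congr rfl fun i _ => ?_
        rw [eK, RingHom.map_sub, sub_mul]
      have hgroup := diag_regroup M d
        (fun n i => ιK p k (eK p k (c a) x n i) * ζ (d + n - i))
      have hEs : ∀ s ∈ Finset.range (M + d),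
          (∑ i ∈ (Finset.range (d + 1)).filter (fun i => d ≤ s + i ∧ s + i < d + M),
            ιK p k (eK p k (c a) x (s + i - d) i) * ζ (d + (s + i - d) - i)) ∈ Operf p k := by
        intro s hs
        have hre : ∀ i ∈ (Finset.range (d + 1)).filter (fun i => d ≤ s + i ∧ s + i < d + M),
            ιK p k (eK p k (c a) x (s + i - d) i) * ζ (d + (s + i - d) - i)
              = ιK p k (eK p k (c a) x (s + i - d) i) * ζ s := by
          intro i hi
          obtain ⟨hiR, h1, h2⟩ := Finset.mem_filter.mp hi
          rw [show d + (s + i - d) - i = s by omega]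
        rw [Finset.sum_congr rfl hre, ← Finset.sum_mul, ← map_sum]
        have hsum := Finset.sum_filter_add_sum_filter_not
          ((Finset.range (d + 1)).filter (fun i => d ≤ s + i)) (fun i => s + i < d + M)
          (fun i => eK p k (c a) x (s + i - d) i)
        rw [Finset.filter_filter, Finset.filter_filter] at hsum
        have h0 : ∑ i ∈ (Finset.range (d + 1)).filter (fun i => d ≤ s + i),
            eK p k (c a) x (s + i - d) i = 0 := by
          rw [← conjEq_eq, hd]
          exact hconj a s
        rw [h0] at hsum
        have hasum : ∑ i ∈ (Finset.range (d + 1)).filter (fun i => d ≤ s + i ∧ s + i < d + M),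
              eK p k (c a) x (s + i - d) i
            = -∑ i ∈ (Finset.range (d + 1)).filter (fun i => d ≤ s + i ∧ ¬ s + i < d + M),
              eK p k (c a) x (s + i - d) i :=
          eq_neg_of_add_eq_zero_left hsum
        rw [hasum, RingHom.map_neg, neg_mul]
        refine O_neg ?_
        rw [map_sum, Finset.sum_mul]
        refine O_sum fun i hi => ?_
        obtain ⟨hiR, hge, hbig⟩ := Finset.mem_filter.mp hi
        have hiR' : i < d + 1 := Finset.mem_range.mp hiR
        have hbig' : d + M ≤ s + i := by omega
        have hsd : d ≤ s := by omega
        have hζs : ζ s = frI p k (s - d) ξ := by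
          simp only [hζdef]
          rw [if_pos hsd]
        rw [hζs]
        have hn1 : 1 ≤ s + i - d := by omega
        have hxn : ((1:ℤ) : WithTop ℤ) ≤ (x (s + i - d)).orderTop := by
          exact_mod_cast one_le_of_pos (hxpos _ hn1)
        have hpart1 := ot_mul_int (a := 0) (by exact_mod_cast hint a i) (ot_pow hxn (p ^ i))
        have hpart1' : ((1:ℤ) : WithTop ℤ) ≤ (c a i * x (s + i - d) ^ p ^ i).orderTop := by
          refine ot_coe_le ?_ hpart1
          have hpi := one_le_pow_int (p := p) i
          push_cast
          linarith
        have hC : ((0:ℤ) : WithTop ℤ) ≤ (HahnSeries.C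
            ((⇑(frobeniusEquiv k p).symm)^[s + i - d] ((c a i).coeff 0)) : LaurentSeries k).orderTop := by
          rw [HahnSeries.C_apply]
          exact_mod_cast HahnSeries.orderTop_single_le
        have hpart2 := ot_mul_int hxn hC
        have he1 : ((1:ℤ) : WithTop ℤ) ≤ (eK p k (c a) x (s + i - d) i).orderTop := by
          rw [eK]
          refine le_trans (le_min hpart1' (ot_coe_le (by norm_num) hpart2))
            HahnSeries.min_orderTop_le_orderTop_sub
        apply Vge_zero_mem
        refine Vge_of_term (cu := 1) (bz := z.order) hz he1
          (le_of_eq (HahnSeries.order_eq_orderTop_of_ne_zero hz0)) ?_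
        have harr : -z.order < (p:ℤ) ^ (m + (s - d)) := by
          refine int_lt_pow ?_
          omega
        push_cast
        linarith
      have hDO : evPsi p k (c a) d (Psum p k x M ξ)
          - Psum p k x M (evPsiBar p k (c a) d ξ) ∈ Operf p k := by
        rw [hDelta, hgroup]
        exact O_sum hEs
      have evadd : ∀ α β : Kperf p k, evPsi p k (c a) d (α + β)
          = evPsi p k (c a) d α + evPsi p k (c a) d β := by
        intro α β
        simp only [evPsi]
        rw [← Finset.sum_add_distrib]
        exact Finset.sum_congr rfl fun i _ => by rw [add_pow_char_pow, mul_add]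
      have evO : ∀ ε : Kperf p k, ε ∈ Operf p k → evPsi p k (c a) d ε ∈ Operf p k :=
        fun ε hε => O_sum fun i _ => O_mul (O_iota (hint a i)) (O_pow hε _)
      have h1 := hkey (evPsiBar p k (c a) d ξ) M (by omega)
      have h2 := hkey ξ M (by omega)
      have h3 : evPsi p k (c a) d (χ ξ) - evPsi p k (c a) d (Psum p k x M ξ) ∈ Operf p k := by
        have heq : evPsi p k (c a) d (χ ξ)
            = evPsi p k (c a) d (Psum p k x M ξ)
              + evPsi p k (c a) d (χ ξ - Psum p k x M ξ) := by
          rw [← evadd, show Psum p k x M ξ + (χ ξ - Psum p k x M ξ) = χ ξ from by ring]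
        have h4 := evO _ h2
        rw [heq, show evPsi p k (c a) d (Psum p k x M ξ)
              + evPsi p k (c a) d (χ ξ - Psum p k x M ξ) - evPsi p k (c a) d (Psum p k x M ξ)
            = evPsi p k (c a) d (χ ξ - Psum p k x M ξ) from by ring]
        exact h4
      rw [show χ (evPsiBar p k (c a) d ξ) - evPsi p k (c a) d (χ ξ)
          = (χ (evPsiBar p k (c a) d ξ) - Psum p k x M (evPsiBar p k (c a) d ξ))
            - (evPsi p k (c a) d (χ ξ) - evPsi p k (c a) d (Psum p k x M ξ))
            - (evPsi p k (c a) d (Psum p k x M ξ) - Psum p k x M (evPsiBar p k (c a) d ξ))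
          from by ring]
      exact O_sub (O_sub h1 h3) hDO
  exact ⟨χ, fun ξ => ⟨Nf ξ, fun M hM => by simpa [Psum] using hkey ξ M hM⟩, hiff, hsurj, hlin⟩

end
end

section
/- Let K be a local field of characteristic p with perfection K^perf, and let ψ be a Drinfeld A-module of good reduction over O_K with canonical series x satisfying ψ_a x = x φ̄_a and x ≡ 1 mod m_K, and χ the induced isomorphism on K^perf/O_{K^perf}. Then for any ξ ∈ K of normalized valuation -i ≤ 0, the element χ^{-1}([ξ]) - [ξ] lies in the submodule W_i(K^perf/O_{K^perf}). -/
/-!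
STATEMENT 13: Setting of the canonical quasi-isomorphism: `K = k((t)) = LaurentSeries k` a
local field of characteristic `p`, `Kperf = PerfectClosure K p` its perfection with valuation
ring `O_{Kperf}`, `ψ` a Drinfeld `A`-module of good reduction over `O_K` with reduction `φ̄`,
`x` the canonical twisted series (`ψ_a x = x φ̄_a`, coefficients in `O_K`, `x ≡ 1 mod m_K`),
and `χ` the induced bijection of `Kperf/O_{Kperf}` (given by the partial-sum formula, well
defined and bijective mod `O`).  Then for any `ξ ∈ K` of normalized valuation `-i ≤ 0`
(`i : ℕ`), the element `χ⁻¹([ξ]) - [ξ]` lies in `W_i(Kperf/O_{Kperf})`, the left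
`R° = k[τ^{±1}]`-submodule generated by the classes of elements of `K` of normalized
valuation `> -i`.  Concretely: if `χ η ≡ ξ mod O_{Kperf}` then `η - ξ` lies in the twisted
Laurent span of such classes.
-/

noncomputable section

variable (p : ℕ) [Fact p.Prime] (k : Type) [Field k] [Fintype k] [CharP k p]

/-- Action of a twisted Laurent polynomial on the perfection. -/
def twistedLaurentAct (q : LaurentPolynomial k) (ξ : Kperf p k) : Kperf p k :=
  Finsupp.sum q.coeff fun i a => ιK p k (HahnSeries.C a) * ((frobeniusEquiv (Kperf p k) p ^ i) ξ)

/-- Membership in the left `R°`-submodule of `Kperf/O_{Kperf}` generated by classes of `S`. -/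
def InTwistedSpan (S : Set (Kperf p k)) (m : Kperf p k) : Prop :=
  ∃ (t : Finset (Kperf p k)) (c : Kperf p k → LaurentPolynomial k),
    ↑t ⊆ S ∧ (m - ∑ ξ ∈ t, twistedLaurentAct p k (c ξ) ξ) ∈ Operf p k

-- ## WithTop ℤ helpers
lemma wt_one_le_of_pos {o : WithTop ℤ} (h : 0 < o) : 1 ≤ o := by
  cases o with
  | top => exact le_top
  | coe c =>
    have : (0:ℤ) < c := by exact_mod_cast h
    exact_mod_cast this

-- ## LaurentSeries orderTop helpers
variable {k}

lemma otop_mul (u v : LaurentSeries k) :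
    (u * v).orderTop = u.orderTop + v.orderTop := by
  rcases eq_or_ne u 0 with rfl | hu
  · simp [HahnSeries.orderTop_zero]
  rcases eq_or_ne v 0 with rfl | hv
  · simp [HahnSeries.orderTop_zero]
  exact HahnSeries.orderTop_mul u v

lemma otop_pow (u : LaurentSeries k) (n : ℕ) :
    (u ^ n).orderTop = n • u.orderTop := by
  induction n with
  | zero => simp [HahnSeries.orderTop_one]
  | succ n ih => rw [pow_succ, otop_mul, ih, succ_nsmul]

lemma otop_pow_nonneg {u : LaurentSeries k} (h : 0 ≤ u.orderTop) (n : ℕ) :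
    0 ≤ (u ^ n).orderTop := by
  rw [otop_pow]; exact nsmul_nonneg h n

lemma otop_nonneg_of_pow {u : LaurentSeries k} {n : ℕ} (hn : 0 < n)
    (h : 0 ≤ (u ^ n).orderTop) : 0 ≤ u.orderTop := by
  by_contra hlt
  push_neg at hlt
  cases ho : u.orderTop with
  | top => rw [ho] at hlt; exact absurd hlt (by simp)
  | coe c =>
    rw [otop_pow, ho] at h
    have hc : c < 0 := by rw [ho] at hlt; exact_mod_cast hlt
    have h2 : (0:ℤ) ≤ n • c := by exact_mod_cast h
    have h3 : n • c = n * c := nsmul_eq_mul n c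
    nlinarith [h3, mul_pos (by exact_mod_cast hn : (0:ℤ) < n) (neg_pos.mpr hc)]

lemma otop_inv_of_zero {u : LaurentSeries k} (h : u.orderTop = 0) :
    (u⁻¹).orderTop = 0 := by
  have hu : u ≠ 0 := by
    intro h0; rw [h0, HahnSeries.orderTop_zero] at h; exact absurd h (by simp)
  have h1 : (u * u⁻¹).orderTop = 0 := by
    rw [mul_inv_cancel₀ hu, HahnSeries.orderTop_one]
  rw [otop_mul, h, zero_add] at h1
  exact h1

lemma le_otop_sum {α : Type*} (s : Finset α) (f : α → LaurentSeries k) (c : WithTop ℤ)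
    (h : ∀ a ∈ s, c ≤ (f a).orderTop) : c ≤ (∑ a ∈ s, f a).orderTop := by
  classical
  induction s using Finset.cons_induction with
  | empty => simp [HahnSeries.orderTop_zero]
  | cons a s ha ih =>
    rw [Finset.sum_cons]
    refine le_trans (le_min (h a (Finset.mem_cons_self a s)) (ih ?_))
      HahnSeries.min_orderTop_le_orderTop_add
    exact fun b hb => h b (Finset.mem_cons_of_mem hb)

-- ## Kperf basics
variable {p} (k)

lemma iK_inj : Function.Injective (ιK p k) := (ιK p k).injective

variable {k}

lemma mk_pow_pm (m : ℕ) (u : LaurentSeries k) :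
    PerfectClosure.mk (LaurentSeries k) p (m, u ^ p ^ m) =
      PerfectClosure.mk (LaurentSeries k) p (0, u) := by
  induction m with
  | zero => simp
  | succ m ih =>
    have : u ^ p ^ (m + 1) = (u ^ p ^ m) ^ p := by
      rw [← pow_mul, pow_succ]
    rw [this, PerfectClosure.mk_succ_pow, ih]

lemma mk_pow_eq_iK (m : ℕ) (u : LaurentSeries k) :
    (PerfectClosure.mk (LaurentSeries k) p (m, u)) ^ p ^ m = ιK p k u := by
  rw [PerfectClosure.mk_pow, mk_pow_pm, PerfectClosure.of_apply]

lemma exists_rep (ξ : Kperf p k) :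
    ∃ m u, ξ = PerfectClosure.mk (LaurentSeries k) p (m, u) := by
  induction ξ using PerfectClosure.induction_on with
  | h x => exact ⟨x.1, x.2, rfl⟩

lemma pow_pm_inj (m : ℕ) : Function.Injective (fun x : Kperf p k => x ^ p ^ m) := by
  have : (fun x : Kperf p k => x ^ p ^ m) = ⇑(iterateFrobenius (Kperf p k) p m) := by
    funext x; rw [iterateFrobenius_def]
  rw [this]
  exact (iterateFrobeniusEquiv (Kperf p k) p m).injective

lemma mem_Operf_of_rep {ξ : Kperf p k} {m : ℕ} {z : LaurentSeries k}
    (h : ξ ^ p ^ m = ιK p k z) (hz : 0 ≤ z.orderTop) : ξ ∈ Operf p k := by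
  intro m' z' h'
  rcases le_total m m' with hm | hm
  · have key : ιK p k z' = ιK p k (z ^ p ^ (m' - m)) := by
      rw [← h', map_pow, ← h, ← pow_mul, ← pow_add, Nat.add_sub_cancel' hm]
    have := iK_inj k key
    rw [this]
    exact otop_pow_nonneg hz _
  · have key : ιK p k (z' ^ p ^ (m - m')) = ιK p k z := by
      rw [map_pow, ← h', ← pow_mul, ← pow_add, Nat.add_sub_cancel' hm, h]
    have hzz : z' ^ p ^ (m - m') = z := iK_inj k key
    refine otop_nonneg_of_pow (n := p ^ (m - m')) (pow_pos (Fact.out : p.Prime).pos _) ?_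
    rw [hzz]; exact hz

lemma mem_Operf_out {ξ : Kperf p k} (hξ : ξ ∈ Operf p k) :
    ∃ m z, ξ ^ p ^ m = ιK p k z ∧ 0 ≤ z.orderTop := by
  obtain ⟨m, u, rfl⟩ := exists_rep ξ
  exact ⟨m, u, mk_pow_eq_iK m u, hξ m u (mk_pow_eq_iK m u)⟩

lemma zero_mem_Operf : (0 : Kperf p k) ∈ Operf p k := by
  refine mem_Operf_of_rep (m := 0) (z := 0) ?_ ?_
  · simp
  · simp

lemma add_mem_Operf {ξ η : Kperf p k} (hξ : ξ ∈ Operf p k) (hη : η ∈ Operf p k) :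
    ξ + η ∈ Operf p k := by
  obtain ⟨m, u, hu, hu0⟩ := mem_Operf_out hξ
  obtain ⟨m', v, hv, hv0⟩ := mem_Operf_out hη
  refine mem_Operf_of_rep (m := m + m') (z := u ^ p ^ m' + v ^ p ^ m) ?_ ?_
  · rw [add_pow_char_pow, RingHom.map_add, RingHom.map_pow, RingHom.map_pow, ← hu, ← hv,
      ← pow_mul, ← pow_mul, ← pow_add, ← pow_add, Nat.add_comm m' m]
  · refine le_trans (le_min (otop_pow_nonneg hu0 _) (otop_pow_nonneg hv0 _))
      HahnSeries.min_orderTop_le_orderTop_add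

lemma neg_mem_Operf {ξ : Kperf p k} (hξ : ξ ∈ Operf p k) : -ξ ∈ Operf p k := by
  obtain ⟨m, u, hu, hu0⟩ := mem_Operf_out hξ
  refine mem_Operf_of_rep (m := m) (z := -u) ?_ ?_
  · have : (-ξ) ^ p ^ m = -(ξ ^ p ^ m) := by
      rw [← iterateFrobenius_def (R := Kperf p k), ← iterateFrobenius_def (R := Kperf p k),
        map_neg]
    rw [this, hu, map_neg]
  · rw [HahnSeries.orderTop_neg]; exact hu0

lemma sub_mem_Operf {ξ η : Kperf p k} (hξ : ξ ∈ Operf p k) (hη : η ∈ Operf p k) :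
    ξ - η ∈ Operf p k := by
  rw [sub_eq_add_neg]; exact add_mem_Operf hξ (neg_mem_Operf hη)

lemma sum_mem_Operf {α : Type*} (s : Finset α) (f : α → Kperf p k)
    (h : ∀ a ∈ s, f a ∈ Operf p k) : (∑ a ∈ s, f a) ∈ Operf p k := by
  classical
  induction s using Finset.cons_induction with
  | empty => simpa using zero_mem_Operf
  | cons a s ha ih =>
    rw [Finset.sum_cons]
    exact add_mem_Operf (h a (Finset.mem_cons_self a s))
      (ih fun b hb => h b (Finset.mem_cons_of_mem hb))

-- ## frI lemmas
lemma frI_zero_app (ξ : Kperf p k) : frI p k 0 ξ = ξ := rfl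

lemma frI_add_app (m n : ℕ) (ξ : Kperf p k) :
    frI p k (m + n) ξ = frI p k m (frI p k n ξ) :=
  Function.iterate_add_apply _ m n ξ

lemma frI_add (n : ℕ) (ξ η : Kperf p k) :
    frI p k n (ξ + η) = frI p k n ξ + frI p k n η := by
  induction n with
  | zero => rfl
  | succ n ih =>
    simp only [frI, Function.iterate_succ_apply'] at *
    rw [ih, RingEquiv.map_add]

lemma frI_zero (n : ℕ) : frI p k n 0 = 0 := by
  induction n with
  | zero => rfl
  | succ n ih =>
    simp only [frI, Function.iterate_succ_apply'] at *
    rw [ih, RingEquiv.map_zero]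

lemma frI_sum {α : Type*} (n : ℕ) (s : Finset α) (f : α → Kperf p k) :
    frI p k n (∑ a ∈ s, f a) = ∑ a ∈ s, frI p k n (f a) := by
  classical
  induction s using Finset.cons_induction with
  | empty => simpa using frI_zero n
  | cons a s ha ih => rw [Finset.sum_cons, Finset.sum_cons, frI_add, ih]

lemma frI_pow_cancel (n : ℕ) (ξ : Kperf p k) : (frI p k n ξ) ^ p ^ n = ξ := by
  induction n with
  | zero => simp [frI]
  | succ n ih =>
    have h1 : frI p k (n + 1) ξ = (frobeniusEquiv (Kperf p k) p).symm (frI p k n ξ) := by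
      simp only [frI, Function.iterate_succ_apply']
    rw [h1, pow_succ', pow_mul, frobeniusEquiv_symm_pow_p, ih]

lemma frI_mul_iK (s : ℕ) (a b : LaurentSeries k) :
    ιK p k a * frI p k s (ιK p k b) = frI p k s (ιK p k (a ^ p ^ s * b)) := by
  apply pow_pm_inj (p := p) (k := k) s
  simp only
  rw [mul_pow, frI_pow_cancel, ← RingHom.map_pow, frI_pow_cancel, ← RingHom.map_mul]

-- ## twisted action lemmas
lemma ringAut_pow_apply {R : Type*} [Add R] [Mul R] (f : RingAut R) (n : ℕ) (x : R) :
    (f ^ n) x = (⇑f)^[n] x := by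
  induction n with
  | zero => rfl
  | succ n ih =>
    have h : (f ^ (n + 1)) x = f ((f ^ n) x) := by rw [pow_succ']; rfl
    rw [h, ih, Function.iterate_succ_apply']

lemma frobeniusEquiv_zpow_neg (s : ℕ) (y : Kperf p k) :
    ((frobeniusEquiv (Kperf p k) p) ^ (-(s : ℤ))) y = frI p k s y := by
  rw [zpow_neg, zpow_natCast, ← inv_pow]
  have hinv : (frobeniusEquiv (Kperf p k) p)⁻¹ = (frobeniusEquiv (Kperf p k) p).symm := rfl
  rw [hinv, ringAut_pow_apply]
  rfl

variable (p) (k)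

lemma act_zero (ξ : Kperf p k) : twistedLaurentAct p k 0 ξ = 0 := by
  unfold twistedLaurentAct; exact Finsupp.sum_zero_index

lemma act_add (q r : LaurentPolynomial k) (ξ : Kperf p k) :
    twistedLaurentAct p k (q + r) ξ =
      twistedLaurentAct p k q ξ + twistedLaurentAct p k r ξ := by
  unfold twistedLaurentAct; rw [AddMonoidAlgebra.coeff_add]
  refine Finsupp.sum_add_index' (fun i => ?_) (fun i a b => ?_)
  · rw [map_zero, RingHom.map_zero, zero_mul]
  · rw [map_add, RingHom.map_add, add_mul]

lemma act_sum {α : Type*} (s : Finset α) (f : α → LaurentPolynomial k) (ξ : Kperf p k) :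
    twistedLaurentAct p k (∑ a ∈ s, f a) ξ = ∑ a ∈ s, twistedLaurentAct p k (f a) ξ := by
  classical
  induction s using Finset.cons_induction with
  | empty => simpa using act_zero p k ξ
  | cons a s ha ih => rw [Finset.sum_cons, Finset.sum_cons, act_add, ih]

lemma act_T_neg (n : ℕ) (ξ : Kperf p k) :
    twistedLaurentAct p k (LaurentPolynomial.T (-(n : ℤ))) ξ = frI p k n ξ := by
  unfold twistedLaurentAct LaurentPolynomial.T
  rw [AddMonoidAlgebra.coeff_single, Finsupp.sum_single_index]
  · rw [map_one, RingHom.map_one, one_mul, frobeniusEquiv_zpow_neg]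
  · rw [map_zero, RingHom.map_zero, zero_mul]

-- ## inverse series coefficients
variable {k} in
def wseq (x : ℕ → LaurentSeries k) : ℕ → LaurentSeries k
  | 0 => (x 0)⁻¹
  | (s + 1) =>
    -((x 0) ^ p ^ (s + 1))⁻¹ *
      ∑ a ∈ (Finset.range (s + 1)).attach,
        x (a.1 + 1) ^ p ^ (s + 1) * wseq x (s - a.1)
  termination_by s => s
  decreasing_by
    have := Finset.mem_range.mp a.2
    omega

variable {k}

lemma wseq_conv (x : ℕ → LaurentSeries k) (hx0 : x 0 ≠ 0) (s : ℕ) :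
    ∑ a ∈ Finset.range (s + 1), x a ^ p ^ s * wseq p x (s - a) =
      if s = 0 then 1 else 0 := by
  cases s with
  | zero =>
    rw [if_pos rfl, Finset.sum_range_one]
    show x 0 ^ p ^ 0 * wseq p x (0 - 0) = 1
    rw [pow_zero, pow_one]
    show x 0 * wseq p x 0 = 1
    rw [wseq, mul_inv_cancel₀ hx0]
  | succ s =>
    rw [if_neg (Nat.succ_ne_zero s), Finset.sum_range_succ']
    have h1 : x 0 ^ p ^ (s + 1) * wseq p x (s + 1 - 0) =
        -∑ a ∈ Finset.range (s + 1), x (a + 1) ^ p ^ (s + 1) * wseq p x (s - a) := by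
      show x 0 ^ p ^ (s + 1) * wseq p x (s + 1) = _
      rw [wseq]
      rw [Finset.sum_attach (Finset.range (s + 1))
        (fun a => x (a + 1) ^ p ^ (s + 1) * wseq p x (s - a))]
      have hA : (x 0 ^ p ^ (s + 1)) ≠ 0 := pow_ne_zero _ hx0
      linear_combination (-(∑ a ∈ Finset.range (s + 1),
        x (a + 1) ^ p ^ (s + 1) * wseq p x (s - a))) * (mul_inv_cancel₀ hA)
    rw [h1]
    have h2 : ∀ a ∈ Finset.range (s + 1),
        x (a + 1) ^ p ^ (s + 1) * wseq p x (s + 1 - (a + 1)) =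
        x (a + 1) ^ p ^ (s + 1) * wseq p x (s - a) := by
      intro a _
      congr 2
      omega
    rw [Finset.sum_congr rfl h2]
    ring

lemma wseq_int (x : ℕ → LaurentSeries k) (hx0ord : (x 0).orderTop = 0)
    (hxpos : ∀ n, 0 < n → 0 < (x n).orderTop) :
    ∀ s, 0 ≤ (wseq p x s).orderTop ∧ (0 < s → 1 ≤ (wseq p x s).orderTop) := by
  intro s
  induction s using Nat.strong_induction_on with
  | _ s ih =>
    match s with
    | 0 =>
      constructor
      · rw [wseq, otop_inv_of_zero hx0ord]
      · intro h; exact absurd h (lt_irrefl 0)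
    | (s + 1) =>
      have hA : ((x 0 ^ p ^ (s + 1))⁻¹).orderTop = 0 := by
        apply otop_inv_of_zero
        rw [otop_pow, hx0ord, smul_zero]
      have hSum : (1 : WithTop ℤ) ≤ (∑ a ∈ (Finset.range (s + 1)).attach,
          x (a.1 + 1) ^ p ^ (s + 1) * wseq p x (s - a.1)).orderTop := by
        apply le_otop_sum
        intro a _
        have h1 : (1 : WithTop ℤ) ≤ (x (a.1 + 1) ^ p ^ (s + 1)).orderTop := by
          rw [otop_pow]
          have hx1 : (1 : WithTop ℤ) ≤ (x (a.1 + 1)).orderTop :=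
            wt_one_le_of_pos (hxpos _ (Nat.succ_pos _))
          calc (1 : WithTop ℤ) = (1 : ℕ) • (1 : WithTop ℤ) := (one_nsmul _).symm
            _ ≤ p ^ (s + 1) • (1 : WithTop ℤ) := by
                have hcoe : p ^ (s + 1) • (1 : WithTop ℤ) =
                    (((p ^ (s + 1) : ℕ) : ℤ) : WithTop ℤ) := by
                  rw [← WithTop.coe_one, ← WithTop.coe_nsmul, nsmul_eq_mul, mul_one]
                rw [hcoe]
                have hp0 : (0:ℤ) < (p : ℤ) ^ (s + 1) :=
                  pow_pos (by exact_mod_cast (Fact.out : p.Prime).pos) _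
                have h1le : (1:ℤ) ≤ ((p ^ (s + 1) : ℕ) : ℤ) := by push_cast; omega
                rw [one_nsmul]
                exact_mod_cast h1le
            _ ≤ p ^ (s + 1) • (x (a.1 + 1)).orderTop := nsmul_le_nsmul_right hx1 _
        have h2 : (0 : WithTop ℤ) ≤ (wseq p x (s - a.1)).orderTop :=
          (ih (s - a.1) (by omega)).1
        calc (1 : WithTop ℤ) = 1 + 0 := (add_zero _).symm
          _ ≤ (x (a.1 + 1) ^ p ^ (s + 1)).orderTop + (wseq p x (s - a.1)).orderTop :=
              add_le_add h1 h2
          _ = _ := (otop_mul _ _).symm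
      have key : (1 : WithTop ℤ) ≤ (wseq p x (s + 1)).orderTop := by
        rw [wseq]
        have e1 := otop_mul (-(x 0 ^ p ^ (s + 1))⁻¹)
          (∑ a ∈ (Finset.range (s + 1)).attach,
            x (a.1 + 1) ^ p ^ (s + 1) * wseq p x (s - a.1))
        rw [HahnSeries.orderTop_neg (x := (x 0 ^ p ^ (s + 1))⁻¹)] at e1
        rw [e1, hA, zero_add]
        exact hSum
      exact ⟨le_trans (by norm_num) key, fun _ => key⟩

-- ## triangle reindexing
lemma triangle_filter_eq (M M' : ℕ) (hMM' : M ≤ M') :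
    (Finset.range M' ×ˢ Finset.range M).filter (fun q => q.1 + q.2 < M) =
      (Finset.range M).biUnion (fun s => Finset.HasAntidiagonal.antidiagonal s) := by
  ext q
  simp only [Finset.mem_filter, Finset.mem_product, Finset.mem_range, Finset.mem_biUnion,
    Finset.HasAntidiagonal.mem_antidiagonal]
  constructor
  · rintro ⟨⟨h1, h2⟩, h3⟩
    exact ⟨q.1 + q.2, h3, rfl⟩
  · rintro ⟨s, hs, rfl⟩
    omega

lemma triangle_sum {β : Type*} [AddCommMonoid β] (M M' : ℕ) (hMM' : M ≤ M')
    (f : ℕ → ℕ → β) :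
    ∑ q ∈ (Finset.range M' ×ˢ Finset.range M).filter (fun q => q.1 + q.2 < M),
        f q.1 q.2 =
      ∑ s ∈ Finset.range M, ∑ a ∈ Finset.range (s + 1), f a (s - a) := by
  rw [triangle_filter_eq M M' hMM']
  rw [Finset.sum_biUnion]
  · refine Finset.sum_congr rfl fun s _ => ?_
    exact Finset.Nat.sum_antidiagonal_eq_sum_range_succ_mk (fun q => f q.1 q.2) s
  · intro a _ b _ hab
    simp only [Finset.disjoint_left, Finset.HasAntidiagonal.mem_antidiagonal]
    intro q hq hq'
    exact hab (hq ▸ hq')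

lemma wt_lt_add_of_pos {a : WithTop ℤ} (c : ℤ) (h : 0 < a) : (c : WithTop ℤ) < a + c := by
  cases a with
  | top => rw [WithTop.top_add]; exact WithTop.coe_lt_top c
  | coe a =>
    have ha : (0 : ℤ) < a := by exact_mod_cast h
    have : (c : ℤ) < a + c := by omega
    exact_mod_cast this

lemma nsmul_one_le_wt {o : WithTop ℤ} (n : ℕ) (h : 1 ≤ o) :
    (((n : ℤ)) : WithTop ℤ) ≤ n • o := by
  have hcoe : n • (1 : WithTop ℤ) = (((n : ℤ)) : WithTop ℤ) := by
    rw [← WithTop.coe_one, ← WithTop.coe_nsmul, nsmul_eq_mul, mul_one]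
  rw [← hcoe]
  exact nsmul_le_nsmul_right h n


variable (k)

theorem chiInv_sub_self_mem_wFiltration
    (A : Type) [CommRing A] (c : A → ℕ → LaurentSeries k) (D : A → ℕ)
    (hint : ∀ a i, 0 ≤ (c a i).orderTop)
    (hsupp : ∀ a i, D a < i → c a i = 0)
    (hone : ∀ ξ : Kperf p k, evPsi p k (c 1) (D 1) ξ = ξ)
    (hadd : ∀ a b ξ, evPsi p k (c (a + b)) (D (a + b)) ξ =
      evPsi p k (c a) (D a) ξ + evPsi p k (c b) (D b) ξ)
    (hmul : ∀ a b ξ, evPsi p k (c (a * b)) (D (a * b)) ξ =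
      evPsi p k (c a) (D a) (evPsi p k (c b) (D b) ξ))
    (hgood : ∀ a : A, a ≠ 0 → (c a (D a)).orderTop = 0)
    (x : ℕ → LaurentSeries k)
    (hxint : ∀ n, 0 ≤ (x n).orderTop)
    (hx0 : 0 < (x 0 - 1).orderTop) (hxpos : ∀ n, 0 < n → 0 < (x n).orderTop)
    (hconj : ∀ (a : A) (m : ℕ), conjEqCoeff p k (D a) (c a) x m = 0)
    (χ : Kperf p k → Kperf p k)
    (hχformula : ∀ ξ : Kperf p k, ∃ N : ℕ, ∀ M, N ≤ M →
      (χ ξ - ∑ n ∈ Finset.range M, ιK p k (x n) * frI p k n ξ) ∈ Operf p k)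
    (hχbij : ∀ ξ η : Kperf p k, (ξ - η ∈ Operf p k ↔ χ ξ - χ η ∈ Operf p k))
    (hχsurj : ∀ η : Kperf p k, ∃ ξ, χ ξ - η ∈ Operf p k)
    (i : ℕ) (ξ : LaurentSeries k) (hξ : ξ.orderTop = ((-(i : ℤ) : ℤ) : WithTop ℤ)) :
    ∀ η : Kperf p k, χ η - ιK p k ξ ∈ Operf p k →
      InTwistedSpan p k
        {y | ∃ z : LaurentSeries k,
          ((-(i : ℤ) : ℤ) : WithTop ℤ) < z.orderTop ∧ y = ιK p k z}
        (η - ιK p k ξ) := by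
  intro η hη
  classical
  -- order facts for x 0
  have hx0ord : (x 0).orderTop = 0 := by
    have hlt : (1 : LaurentSeries k).orderTop < (x 0 - 1).orderTop := by
      rw [HahnSeries.orderTop_one]; exact hx0
    have h := HahnSeries.orderTop_add_eq_left hlt
    have hx0e : (1 : LaurentSeries k) + (x 0 - 1) = x 0 := by ring
    rw [hx0e, HahnSeries.orderTop_one] at h
    exact h
  have hx0ne : x 0 ≠ 0 := by
    intro h0
    rw [h0, HahnSeries.orderTop_zero] at hx0ord
    exact absurd hx0ord (by simp)
  have hwint := wseq_int p x hx0ord hxpos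
  have hw0 : wseq p x 0 = (x 0)⁻¹ := by rw [wseq]
  set M : ℕ := i + 1 with hM
  set z : ℕ → LaurentSeries k :=
    fun n => (if n = 0 then wseq p x 0 - 1 else wseq p x n) * ξ with hz
  have hz0 : z 0 = (wseq p x 0 - 1) * ξ := by simp [hz]
  have hzn : ∀ n, n ≠ 0 → z n = wseq p x n * ξ := by
    intro n hn; rw [hz]; simp only [if_neg hn]
  set g : ℕ → Kperf p k := fun n => frI p k n (ιK p k (z n)) with hg
  set η' : Kperf p k :=
    ∑ n ∈ Finset.range M, frI p k n (ιK p k (wseq p x n * ξ)) with hη'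
  -- Step A : η' - ιK ξ = ∑ g
  have stepA : η' - ιK p k ξ = ∑ n ∈ Finset.range M, g n := by
    have hdiff : η' - ∑ n ∈ Finset.range M, g n = ιK p k ξ := by
      rw [hη', ← Finset.sum_sub_distrib]
      have hterm : ∀ n ∈ Finset.range M,
          frI p k n (ιK p k (wseq p x n * ξ)) - g n =
            if n = 0 then ιK p k ξ else 0 := by
        intro n _
        by_cases hn : n = 0
        · subst hn
          rw [if_pos rfl, hg]
          simp only [frI_zero_app]
          rw [← RingHom.map_sub, hz0]
          congr 1
          ring
        · rw [if_neg hn, hg]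
          simp only [hzn n hn, sub_self]
      rw [Finset.sum_congr rfl hterm, Finset.sum_ite_eq' (Finset.range M) 0
        (fun _ => ιK p k ξ)]
      rw [if_pos (Finset.mem_range.mpr (by omega))]
    linear_combination hdiff
  -- order bound for generators
  have hzord : ∀ n, ((-(i : ℤ) : ℤ) : WithTop ℤ) < (z n).orderTop := by
    intro n
    have ho : (z n).orderTop =
        (if n = 0 then wseq p x 0 - 1 else wseq p x n).orderTop +
          ((-(i : ℤ) : ℤ) : WithTop ℤ) := by
      rw [hz]
      simp only
      rw [otop_mul, hξ]
    rw [ho]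
    apply wt_lt_add_of_pos
    by_cases hn : n = 0
    · subst hn
      rw [if_pos rfl]
      have hweq : wseq p x 0 - 1 = (x 0)⁻¹ * (1 - x 0) := by
        rw [hw0]
        linear_combination (mul_inv_cancel₀ hx0ne)
      rw [hweq, otop_mul, otop_inv_of_zero hx0ord, zero_add]
      have h2 : (1 : LaurentSeries k) - x 0 = -(x 0 - 1) := by ring
      rw [h2, HahnSeries.orderTop_neg]
      exact hx0
    · rw [if_neg hn]
      have h1 := (hwint n).2 (Nat.pos_of_ne_zero hn)
      exact lt_of_lt_of_le (by norm_num) h1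
  -- Step B : χ η' - ιK ξ ∈ Operf
  obtain ⟨N, hN⟩ := hχformula η'
  set M' : ℕ := max N M with hM'
  have hpart := hN M' (le_max_left _ _)
  have e3 : ∑ n ∈ Finset.range M', ιK p k (x n) * frI p k n η' =
      ∑ q ∈ Finset.range M' ×ˢ Finset.range M,
        frI p k (q.1 + q.2) (ιK p k (x q.1 ^ p ^ (q.1 + q.2) * (wseq p x q.2 * ξ))) := by
    rw [Finset.sum_product]
    refine Finset.sum_congr rfl fun m _ => ?_
    rw [hη', frI_sum, Finset.mul_sum]
    refine Finset.sum_congr rfl fun n _ => ?_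
    rw [← frI_add_app, frI_mul_iK]
  have esplit := Finset.sum_filter_add_sum_filter_not
    (Finset.range M' ×ˢ Finset.range M) (fun q => q.1 + q.2 < M)
    (fun q => frI p k (q.1 + q.2) (ιK p k (x q.1 ^ p ^ (q.1 + q.2) * (wseq p x q.2 * ξ))))
  have e5 : ∑ q ∈ (Finset.range M' ×ˢ Finset.range M).filter (fun q => q.1 + q.2 < M),
      frI p k (q.1 + q.2) (ιK p k (x q.1 ^ p ^ (q.1 + q.2) * (wseq p x q.2 * ξ))) =
        ιK p k ξ := by
    rw [triangle_sum M M' (le_max_right N M)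
      (fun a b => frI p k (a + b) (ιK p k (x a ^ p ^ (a + b) * (wseq p x b * ξ))))]
    have e5a : ∀ s ∈ Finset.range M,
        (∑ a ∈ Finset.range (s + 1),
          frI p k (a + (s - a)) (ιK p k (x a ^ p ^ (a + (s - a)) * (wseq p x (s - a) * ξ)))) =
        frI p k s (ιK p k ((if s = 0 then 1 else 0) * ξ)) := by
      intro s hs
      have h1 : ∀ a ∈ Finset.range (s + 1),
          frI p k (a + (s - a)) (ιK p k (x a ^ p ^ (a + (s - a)) * (wseq p x (s - a) * ξ))) =
          frI p k s (ιK p k (x a ^ p ^ s * (wseq p x (s - a) * ξ))) := by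
        intro a ha
        have hasa : a + (s - a) = s := by
          have := Finset.mem_range.mp ha; omega
        rw [hasa]
      rw [Finset.sum_congr rfl h1, ← frI_sum]
      congr 1
      rw [← map_sum (ιK p k) (fun a => x a ^ p ^ s * (wseq p x (s - a) * ξ))
        (Finset.range (s + 1))]
      congr 1
      rw [← wseq_conv p x hx0ne s, Finset.sum_mul]
      refine Finset.sum_congr rfl fun a _ => ?_
      rw [mul_assoc]
    rw [Finset.sum_congr rfl e5a]
    rw [Finset.sum_eq_single 0]
    · rw [if_pos rfl, one_mul, frI_zero_app]
    · intro s _ hs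
      rw [if_neg hs, zero_mul, RingHom.map_zero, frI_zero]
    · intro h0
      exact absurd (Finset.mem_range.mpr (by omega)) h0
  have e6 : (∑ q ∈ (Finset.range M' ×ˢ Finset.range M).filter
        (fun q => ¬ q.1 + q.2 < M),
      frI p k (q.1 + q.2) (ιK p k (x q.1 ^ p ^ (q.1 + q.2) * (wseq p x q.2 * ξ))))
        ∈ Operf p k := by
    apply sum_mem_Operf
    intro q hq
    obtain ⟨hqmem, hqge⟩ := Finset.mem_filter.mp hq
    obtain ⟨hq1, hq2⟩ := Finset.mem_product.mp hqmem
    rw [Finset.mem_range] at hq1 hq2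
    have hm1 : 1 ≤ q.1 := by omega
    apply mem_Operf_of_rep (m := q.1 + q.2) (frI_pow_cancel _ _)
    have hb1 : (((p ^ (q.1 + q.2) : ℕ) : ℤ) : WithTop ℤ) ≤
        (x q.1 ^ p ^ (q.1 + q.2)).orderTop := by
      rw [otop_pow]
      exact nsmul_one_le_wt _ (wt_one_le_of_pos (hxpos _ hm1))
    have hb2 : ((-(i : ℤ) : ℤ) : WithTop ℤ) ≤ (wseq p x q.2 * ξ).orderTop := by
      rw [otop_mul, hξ]
      calc ((-(i : ℤ) : ℤ) : WithTop ℤ) = 0 + ((-(i : ℤ) : ℤ) : WithTop ℤ) := by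
            rw [zero_add]
        _ ≤ _ := add_le_add (hwint q.2).1 le_rfl
    have hps : i < p ^ (q.1 + q.2) := by
      calc i < 2 ^ i := Nat.lt_two_pow_self
        _ ≤ 2 ^ (q.1 + q.2) := Nat.pow_le_pow_right (by norm_num) (by omega)
        _ ≤ p ^ (q.1 + q.2) := Nat.pow_le_pow_left (Fact.out : p.Prime).two_le _
    have hple : (0 : WithTop ℤ) ≤
        ((((p ^ (q.1 + q.2) : ℕ) : ℤ) + (-(i : ℤ)) : ℤ) : WithTop ℤ) := by
      have hz' : (0 : ℤ) ≤ ((p ^ (q.1 + q.2) : ℕ) : ℤ) + (-(i : ℤ)) := by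
        have hps' : ((i : ℤ)) < ((p ^ (q.1 + q.2) : ℕ) : ℤ) := by exact_mod_cast hps
        omega
      exact_mod_cast hz'
    calc (0 : WithTop ℤ)
        ≤ (((p ^ (q.1 + q.2) : ℕ) : ℤ) : WithTop ℤ) + ((-(i : ℤ) : ℤ) : WithTop ℤ) := by
          rw [← WithTop.coe_add]; exact hple
      _ ≤ (x q.1 ^ p ^ (q.1 + q.2)).orderTop + (wseq p x q.2 * ξ).orderTop :=
          add_le_add hb1 hb2
      _ = (x q.1 ^ p ^ (q.1 + q.2) * (wseq p x q.2 * ξ)).orderTop := (otop_mul _ _).symm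
  have stepB : χ η' - ιK p k ξ ∈ Operf p k := by
    have hrw : χ η' - ιK p k ξ =
        (χ η' - ∑ n ∈ Finset.range M', ιK p k (x n) * frI p k n η') +
          ∑ q ∈ (Finset.range M' ×ˢ Finset.range M).filter (fun q => ¬ q.1 + q.2 < M),
            frI p k (q.1 + q.2) (ιK p k (x q.1 ^ p ^ (q.1 + q.2) * (wseq p x q.2 * ξ))) := by
      rw [e3, ← esplit, e5]
      ring
    rw [hrw]
    exact add_mem_Operf hpart e6
  -- Step C : η - η' ∈ Operf
  have stepC : η - η' ∈ Operf p k := by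
    apply (hχbij η η').mpr
    have h := sub_mem_Operf hη stepB
    have he : χ η - ιK p k ξ - (χ η' - ιK p k ξ) = χ η - χ η' := by ring
    rw [he] at h
    exact h
  -- Step D : assemble the twisted span witness
  refine ⟨(Finset.range M).image (fun n => ιK p k (z n)),
    fun y => ∑ n ∈ (Finset.range M).filter (fun n => ιK p k (z n) = y),
      LaurentPolynomial.T (-(n : ℤ)), ?_, ?_⟩
  · intro y hy
    rw [Finset.mem_coe, Finset.mem_image] at hy
    obtain ⟨n, _, rfl⟩ := hy
    exact ⟨z n, hzord n, rfl⟩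
  · have hact : ∑ y ∈ (Finset.range M).image (fun n => ιK p k (z n)),
        twistedLaurentAct p k
          (∑ n ∈ (Finset.range M).filter (fun n => ιK p k (z n) = y),
            LaurentPolynomial.T (-(n : ℤ))) y =
        ∑ n ∈ Finset.range M, g n := by
      have h1 : ∀ y ∈ (Finset.range M).image (fun n => ιK p k (z n)),
          twistedLaurentAct p k
            (∑ n ∈ (Finset.range M).filter (fun n => ιK p k (z n) = y),
              LaurentPolynomial.T (-(n : ℤ))) y =
          ∑ n ∈ (Finset.range M).filter (fun n => ιK p k (z n) = y), g n := by
        intro y _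
        rw [act_sum]
        refine Finset.sum_congr rfl fun n hn => ?_
        obtain ⟨_, hny⟩ := Finset.mem_filter.mp hn
        rw [← hny, act_T_neg, hg]
      rw [Finset.sum_congr rfl h1]
      exact Finset.sum_fiberwise_of_maps_to
        (fun n hn => Finset.mem_image_of_mem _ hn) g
    rw [hact]
    have hfin : η - ιK p k ξ - ∑ n ∈ Finset.range M, g n = η - η' := by
      rw [← stepA]; ring
    rw [hfin]
    exact stepC


end
end
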